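/- arXiv:0810.5256 — 3 statements merged into one kernel-verified Lean document; each statement's English description precedes it below -/
import Mathlib

section
/- Let r ≥ 1, a ≥ 0, b ≥ 0 be integers, and set p = (r−1)a + b + 2, s = 1 + (r−1)a/2 + b (a rational number) and n = r·s = r + r(r−1)a/2 + rb (a positive integer). Then there exists a monic polynomial Q with real coefficients of degree n such that for every real x ≥ 0, Q(x) = ∏_{j=1}^{r} Γ(x + p − (j−1)a/2) / Γ(x + p − s − (j−1)a/2), where Γ is the Euler Gamma function. -/
open Finset Polynomial

private lemma gamma_ratio_aux (z : ℝ) (hz : 0 < z) (m : ℕ) :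
    Real.Gamma (z + m) = Real.Gamma z * ∏ k ∈ Finset.range m, (z + k) := by
  induction m with
  | zero => simp
  | succ m ih =>
    have h1 : z + ((m + 1 : ℕ) : ℝ) = (z + m) + 1 := by push_cast; ring
    have h2 : z + (m : ℝ) ≠ 0 := by positivity
    rw [h1, Real.Gamma_add_one h2, ih, Finset.prod_range_succ]
    ring

private lemma gauss_sum_q (r : ℕ) : (∑ i ∈ Finset.range r, (i : ℚ)) * 2 = r * (r - 1) := by
  induction r with
  | zero => simp
  | succ r ih =>
    rw [Finset.sum_range_succ, add_mul, ih]
    push_cast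
    ring

/-- The generalized Pochhammer symbol `[x + p - n/r]_{n/r}`, written as a product of
ratios of Gamma functions, is a monic polynomial of degree `n` in `x`. -/
theorem stmt_2 (r a b : ℕ) (hr : 1 ≤ r)
    (p : ℕ) (hp : p = (r - 1) * a + b + 2)
    (s : ℚ) (hs : s = 1 + ((r : ℚ) - 1) * a / 2 + b)
    (n : ℕ) (hn : (n : ℚ) = r * s) :
    ∃ Q : Polynomial ℝ, Q.Monic ∧ Q.natDegree = n ∧
      ∀ x : ℝ, 0 ≤ x →
        Q.eval x = ∏ j ∈ Finset.range r,
          Real.Gamma (x + p - j * a / 2) / Real.Gamma (x + p - (s : ℝ) - j * a / 2) := by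
  -- cast facts
  have hpR : (p : ℝ) = ((r : ℝ) - 1) * a + b + 2 := by
    rw [hp]; push_cast [Nat.cast_sub hr]; ring
  have hsR : (s : ℝ) = 1 + ((r : ℝ) - 1) * a / 2 + b := by
    have := congrArg (fun q : ℚ => (q : ℝ)) hs
    push_cast at this
    simpa using this
  -- the integer shifts
  set m : ℕ → ℕ := fun j => (r - 1 - j) * a + b + 1 with hm
  have hcast : ∀ j ∈ Finset.range r, ((r - 1 - j : ℕ) : ℝ) = (r : ℝ) - 1 - j := by
    intro j hj
    rw [Finset.mem_range] at hj
    have h1 : j ≤ r - 1 := Nat.le_sub_one_of_lt hj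
    push_cast [Nat.cast_sub h1, Nat.cast_sub hr]
    ring
  -- the polynomial
  refine ⟨∏ j ∈ Finset.range r, ∏ k ∈ Finset.range (m j),
      (Polynomial.X + Polynomial.C ((1 : ℝ) + j * a / 2 + k)), ?_, ?_, ?_⟩
  · exact Polynomial.monic_prod_of_monic _ _ fun j _ =>
      Polynomial.monic_prod_of_monic _ _ fun k _ => Polynomial.monic_X_add_C _
  · -- degree computation
    have hdeg : (∏ j ∈ Finset.range r, ∏ k ∈ Finset.range (m j),
        (Polynomial.X + Polynomial.C ((1 : ℝ) + j * a / 2 + k))).natDegree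
        = ∑ j ∈ Finset.range r, m j := by
      rw [Polynomial.natDegree_prod_of_monic _ _
        (fun j _ => Polynomial.monic_prod_of_monic _ _ fun k _ => Polynomial.monic_X_add_C _)]
      refine Finset.sum_congr rfl fun j _ => ?_
      rw [Polynomial.natDegree_prod_of_monic _ _ fun k _ => Polynomial.monic_X_add_C _,
        Finset.sum_congr rfl fun k _ => Polynomial.natDegree_X_add_C _]
      simp
    rw [hdeg]
    -- reflect the sum
    have hrefl : ∑ j ∈ Finset.range r, m j = ∑ j ∈ Finset.range r, (j * a + b + 1) := by
      simpa using (Finset.sum_range_reflect (fun j => j * a + b + 1) r)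
    rw [hrefl]
    have : ((∑ j ∈ Finset.range r, (j * a + b + 1) : ℕ) : ℚ) = (n : ℚ) := by
      push_cast
      rw [Finset.sum_add_distrib, Finset.sum_add_distrib, ← Finset.sum_mul]
      have hg := gauss_sum_q r
      rw [hn, hs]
      simp only [Finset.sum_const, Finset.card_range, nsmul_eq_mul]
      field_simp
      nlinarith [hg]
    exact_mod_cast this
  · -- evaluation
    intro x hx
    -- numerator rewriting
    have hnum : ∀ j ∈ Finset.range r,
        Real.Gamma (x + p - j * a / 2)
          = Real.Gamma ((x + 1 + j * a / 2) + (m j : ℕ)) := by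
      intro j hj
      congr 1
      have h1 := hcast j hj
      push_cast [hm, h1, hpR]
      ring
    have hden : ∀ j ∈ Finset.range r,
        Real.Gamma (x + p - (s : ℝ) - j * a / 2)
          = Real.Gamma (x + 1 + ((r - 1 - j : ℕ) : ℝ) * a / 2) := by
      intro j hj
      congr 1
      rw [hcast j hj, hpR, hsR]
      ring
    calc (∏ j ∈ Finset.range r, ∏ k ∈ Finset.range (m j),
            (Polynomial.X + Polynomial.C ((1 : ℝ) + j * a / 2 + k))).eval x
        = ∏ j ∈ Finset.range r, ∏ k ∈ Finset.range (m j), ((x + 1 + j * a / 2) + k) := by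
          rw [Polynomial.eval_prod]
          refine Finset.prod_congr rfl fun j _ => ?_
          rw [Polynomial.eval_prod]
          refine Finset.prod_congr rfl fun k _ => ?_
          simp; ring
      _ = ∏ j ∈ Finset.range r,
            Real.Gamma ((x + 1 + j * a / 2) + (m j : ℕ)) / Real.Gamma (x + 1 + j * a / 2) := by
          refine Finset.prod_congr rfl fun j _ => ?_
          have hz : (0 : ℝ) < x + 1 + j * a / 2 := by positivity
          rw [gamma_ratio_aux _ hz (m j),
            mul_div_cancel_left₀ _ (Real.Gamma_pos_of_pos hz).ne']
      _ = (∏ j ∈ Finset.range r, Real.Gamma ((x + 1 + j * a / 2) + (m j : ℕ)))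
            / ∏ j ∈ Finset.range r, Real.Gamma (x + 1 + j * a / 2) := by
          rw [Finset.prod_div_distrib]
      _ = (∏ j ∈ Finset.range r, Real.Gamma ((x + 1 + j * a / 2) + (m j : ℕ)))
            / ∏ j ∈ Finset.range r, Real.Gamma (x + 1 + ((r - 1 - j : ℕ) : ℝ) * a / 2) := by
          congr 1
          exact (Finset.prod_range_reflect (fun j => Real.Gamma (x + 1 + (j : ℝ) * a / 2)) r).symm
      _ = ∏ j ∈ Finset.range r,
            Real.Gamma (x + p - j * a / 2) / Real.Gamma (x + p - (s : ℝ) - j * a / 2) := by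
          rw [Finset.prod_div_distrib]
          congr 1
          · exact Finset.prod_congr rfl fun j hj => (hnum j hj).symm
          · exact Finset.prod_congr rfl fun j hj => (hden j hj).symm
end

section
/- Let n ≥ 1 and μ ≥ 1 be integers. Then there exist real constants c_0, …, c_n, with c_n = (−1)^{n+1} · μ^n, such that for all z, w ∈ ℂ^n and λ, β ∈ ℂ satisfying |λ|² (1+‖z‖²)^μ < 1 and |β|² (1+‖w‖²)^μ < 1, the series ∑_{ν=0}^∞ C(μν+n, n) · (1 + ⟪z, w⟫)^{μν} · (λ · conj(β))^ν converges and equals ∑_{m=0}^{n} c_m · (λ · conj(β) · (1 + ⟪z, w⟫)^μ − 1)^{−(m+1)}. Here C(μν+n, n) is the binomial coefficient, ⟪z, w⟫ = ∑_{i=1}^n z_i · conj(w_i), and ‖z‖² = ∑_{i=1}^n |z_i|². -/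
open Polynomial Finset

lemma nat_prod_choose (m : ℕ) (ν : ℕ) :
    m.factorial * (ν + m).choose m = ∏ j ∈ range m, (ν + j + 1) := by
  induction m with
  | zero => simp
  | succ m ih =>
    rw [prod_range_succ, ← ih]
    have h : (ν + m + 1) * (ν + m).choose m = (ν + m + 1).choose (m + 1) * (m + 1) :=
      Nat.add_one_mul_choose_eq (ν + m) m
    rw [Nat.factorial_succ]
    calc (m + 1) * m.factorial * ((ν + m + 1).choose (m + 1))
        = m.factorial * ((ν + m + 1).choose (m + 1) * (m + 1)) := by ring
      _ = m.factorial * ((ν + m + 1) * (ν + m).choose m) := by rw [← h]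
      _ = m.factorial * (ν + m).choose m * (ν + m + 1) := by ring

lemma real_prod_choose (m : ℕ) (x : ℕ) :
    ∏ j ∈ range m, ((x : ℝ) + (j + 1)) = (m.factorial : ℝ) * ((x + m).choose m : ℝ) := by
  have h : ((m.factorial * (x + m).choose m : ℕ) : ℝ) = ((∏ j ∈ range m, (x + j + 1) : ℕ) : ℝ) :=
    congrArg _ (nat_prod_choose m x)
  push_cast at h
  calc ∏ j ∈ range m, ((x : ℝ) + (j + 1))
      = ∏ j ∈ range m, ((x : ℝ) + j + 1) := Finset.prod_congr rfl fun j _ => by ring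
    _ = (m.factorial : ℝ) * ((x + m).choose m : ℝ) := h.symm

noncomputable def qp (m : ℕ) : Polynomial ℝ :=
  C ((m.factorial : ℝ))⁻¹ * ∏ j ∈ range m, (X + C ((j : ℝ) + 1))

lemma qp_eval (m ν : ℕ) : (qp m).eval (ν : ℝ) = (((ν + m).choose m : ℕ) : ℝ) := by
  have hf : (m.factorial : ℝ) ≠ 0 := by exact_mod_cast m.factorial_ne_zero
  simp only [qp, eval_mul, eval_C, eval_prod, eval_add, eval_X]
  rw [real_prod_choose m ν]
  field_simp

lemma qp_prod_monic (m : ℕ) : (∏ j ∈ range m, (X + C ((j : ℝ) + 1))).Monic :=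
  monic_prod_of_monic _ _ fun j _ => monic_X_add_C _

lemma qp_prod_natDegree (m : ℕ) : (∏ j ∈ range m, (X + C ((j : ℝ) + 1))).natDegree = m := by
  rw [natDegree_prod_of_monic _ _ fun j _ => monic_X_add_C _]
  simp only [natDegree_X_add_C, Finset.sum_const, smul_eq_mul, mul_one, Finset.card_range]

lemma qp_natDegree_le (m : ℕ) : (qp m).natDegree ≤ m :=
  (natDegree_C_mul_le _ _).trans (qp_prod_natDegree m).le

lemma qp_coeff (m : ℕ) : (qp m).coeff m = ((m.factorial : ℝ))⁻¹ := by
  rw [qp, coeff_C_mul]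
  have := (qp_prod_monic m).leadingCoeff
  rw [Polynomial.leadingCoeff, qp_prod_natDegree m] at this
  rw [this, mul_one]

lemma span (N : ℕ) : ∀ p : Polynomial ℝ, p.natDegree ≤ N →
    ∃ a : ℕ → ℝ, a N = p.coeff N * N.factorial ∧
      ∀ ν : ℕ, p.eval (ν : ℝ) = ∑ m ∈ range (N + 1), a m * (((ν + m).choose m : ℕ) : ℝ) := by
  induction N with
  | zero =>
    intro p hp
    refine ⟨fun _ => p.coeff 0, by simp, fun ν => ?_⟩
    rw [Polynomial.eq_C_of_natDegree_le_zero hp]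
    simp
  | succ N ih =>
    intro p hp
    set k : ℝ := p.coeff (N + 1) * (N + 1).factorial with hk
    set r : Polynomial ℝ := p - C k * qp (N + 1) with hr
    have hf : ((N + 1).factorial : ℝ) ≠ 0 := by exact_mod_cast (N + 1).factorial_ne_zero
    have hrc : r.coeff (N + 1) = 0 := by
      rw [hr, coeff_sub, coeff_C_mul, qp_coeff]
      field_simp [hk]
      ring
    have hrd : r.natDegree ≤ N := by
      rw [natDegree_le_iff_coeff_eq_zero]
      intro M hM
      rcases eq_or_lt_of_le (Nat.succ_le_of_lt hM) with h | h
      · rw [← h]; exact hrc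
      · rw [hr, coeff_sub, coeff_eq_zero_of_natDegree_lt (lt_of_le_of_lt hp h),
          coeff_eq_zero_of_natDegree_lt
            (lt_of_le_of_lt ((natDegree_C_mul_le _ _).trans (qp_natDegree_le _)) h), sub_zero]
    obtain ⟨a, ha, hsum⟩ := ih r hrd
    refine ⟨fun m => if m = N + 1 then k else a m, by simp, fun ν => ?_⟩
    have hpr : p.eval (ν : ℝ) = r.eval (ν : ℝ) + k * (qp (N + 1)).eval (ν : ℝ) := by
      rw [hr]; simp
    have hsplit : ∑ m ∈ range (N + 1 + 1),
          (if m = N + 1 then k else a m) * (((ν + m).choose m : ℕ) : ℝ)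
        = (∑ m ∈ range (N + 1), a m * (((ν + m).choose m : ℕ) : ℝ))
            + k * (((ν + (N + 1)).choose (N + 1) : ℕ) : ℝ) := by
      rw [Finset.sum_range_succ, if_pos rfl]
      congr 1
      exact Finset.sum_congr rfl fun m hm => by
        rw [if_neg (Nat.ne_of_lt (Finset.mem_range.mp hm))]
    rw [hpr, hsum ν, qp_eval, hsplit]

lemma coeffs_exist (n μ : ℕ) (hμ : 1 ≤ μ) :
    ∃ a : ℕ → ℝ, a n = (μ : ℝ) ^ n ∧
      ∀ ν : ℕ, (((μ * ν + n).choose n : ℕ) : ℝ)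
        = ∑ m ∈ range (n + 1), a m * (((ν + m).choose m : ℕ) : ℝ) := by
  have hμR : (μ : ℝ) ≠ 0 := by positivity
  have hf : (n.factorial : ℝ) ≠ 0 := by exact_mod_cast n.factorial_ne_zero
  set p : Polynomial ℝ :=
    C ((n.factorial : ℝ))⁻¹ * ∏ j ∈ range n, (C (μ : ℝ) * X + C ((j : ℝ) + 1)) with hp
  have hdeg : p.natDegree ≤ n := by
    refine (natDegree_C_mul_le _ _).trans ?_
    refine (natDegree_prod_le _ _).trans ?_
    have h1 : ∑ j ∈ range n, (C (μ : ℝ) * X + C ((j : ℝ) + 1)).natDegree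
        ≤ ∑ _j ∈ range n, 1 :=
      Finset.sum_le_sum fun j _ => natDegree_linear_le
    simpa using h1
  have hcoeff : p.coeff n = ((n.factorial : ℝ))⁻¹ * (μ : ℝ) ^ n := by
    have hne : ∀ j ∈ range n, (C (μ : ℝ) * X + C ((j : ℝ) + 1)) ≠ 0 := by
      intro j _
      intro h
      have := natDegree_linear (b := ((j : ℝ) + 1)) hμR
      rw [h] at this
      simp at this
    have hd : (∏ j ∈ range n, (C (μ : ℝ) * X + C ((j : ℝ) + 1))).natDegree = n := by
      rw [natDegree_prod _ _ hne]
      calc ∑ j ∈ range n, (C (μ : ℝ) * X + C ((j : ℝ) + 1)).natDegree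
          = ∑ _j ∈ range n, 1 := Finset.sum_congr rfl fun j _ => natDegree_linear hμR
        _ = n := by simp
    have hl : (∏ j ∈ range n, (C (μ : ℝ) * X + C ((j : ℝ) + 1))).leadingCoeff = (μ : ℝ) ^ n := by
      rw [leadingCoeff_prod]
      calc ∏ j ∈ range n, (C (μ : ℝ) * X + C ((j : ℝ) + 1)).leadingCoeff
          = ∏ _j ∈ range n, (μ : ℝ) := Finset.prod_congr rfl fun j _ => leadingCoeff_linear hμR
        _ = (μ : ℝ) ^ n := by simp
    rw [hp, coeff_C_mul]
    rw [Polynomial.leadingCoeff, hd] at hl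
    rw [hl]
  have heval : ∀ ν : ℕ, p.eval (ν : ℝ) = (((μ * ν + n).choose n : ℕ) : ℝ) := by
    intro ν
    have := real_prod_choose n (μ * ν)
    push_cast at this
    simp only [hp, eval_mul, eval_C, eval_prod, eval_add, eval_X]
    rw [this]
    field_simp
  obtain ⟨a, ha, hsum⟩ := span n p hdeg
  refine ⟨a, ?_, fun ν => by rw [← heval ν, hsum ν]⟩
  rw [ha, hcoeff]
  field_simp


set_option maxHeartbeats 1000000 in
/-- Theorem 3.2A for `M = ℂPⁿ`: the Szegő kernel of the circle bundle `S(L^{*μ})`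
has an expansion without logarithmic term. -/
theorem stmt_7 (n μ : ℕ) (hn : 1 ≤ n) (hμ : 1 ≤ μ) :
    ∃ c : ℕ → ℝ,
      c n = (-1) ^ (n + 1) * (μ : ℝ) ^ n ∧
      ∀ (z w : Fin n → ℂ) (lam β : ℂ),
        ‖lam‖ ^ 2 * (1 + ∑ i, ‖z i‖ ^ 2) ^ μ < 1 →
        ‖β‖ ^ 2 * (1 + ∑ i, ‖w i‖ ^ 2) ^ μ < 1 →
        HasSum
          (fun ν : ℕ => ((Nat.choose (μ * ν + n) n : ℕ) : ℂ) *
            (1 + ∑ i, z i * (starRingEnd ℂ) (w i)) ^ (μ * ν) *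
            (lam * (starRingEnd ℂ) β) ^ ν)
          (∑ m ∈ Finset.range (n + 1), ((c m : ℝ) : ℂ) *
            (lam * (starRingEnd ℂ) β * (1 + ∑ i, z i * (starRingEnd ℂ) (w i)) ^ μ - 1)
              ^ (-((m : ℤ) + 1))) := by
  obtain ⟨a, han, hrep⟩ := coeffs_exist n μ hμ
  refine ⟨fun m => (-1 : ℝ) ^ (m + 1) * a m, by simp only; rw [han], ?_⟩
  intro z w lam β hz hw
  set s : ℂ := 1 + ∑ i, z i * (starRingEnd ℂ) (w i) with hs
  set t : ℂ := lam * (starRingEnd ℂ) β * s ^ μ with hts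
  set A := ∑ i, ‖z i‖ ^ 2 with hA'
  set B := ∑ i, ‖w i‖ ^ 2 with hB'
  set P := ∑ i, ‖z i‖ * ‖w i‖ with hP'
  have hA : 0 ≤ A := Finset.sum_nonneg fun i _ => sq_nonneg _
  have hB : 0 ≤ B := Finset.sum_nonneg fun i _ => sq_nonneg _
  have hP : 0 ≤ P := Finset.sum_nonneg fun i _ =>
    mul_nonneg (norm_nonneg _) (norm_nonneg _)
  have hP2 : P ^ 2 ≤ A * B := Finset.sum_mul_sq_le_sq_mul_sq _ _ _
  have hsle : ‖s‖ ≤ 1 + P := by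
    rw [hs]
    refine (norm_add_le _ _).trans ?_
    rw [norm_one]
    have : ‖∑ i, z i * (starRingEnd ℂ) (w i)‖ ≤ P := by
      refine (norm_sum_le _ _).trans ?_
      rw [hP']
      exact Finset.sum_le_sum fun i _ => by
        rw [norm_mul, Complex.norm_conj]
    linarith
  have hs2 : ‖s‖ ^ 2 ≤ (1 + A) * (1 + B) := by
    have h1 : ‖s‖ ^ 2 ≤ (1 + P) ^ 2 :=
      pow_le_pow_left₀ (norm_nonneg s) hsle 2
    nlinarith [sq_nonneg (A - B), sq_nonneg (A + B - 2 * P)]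
  have habs_t : ‖t‖ = ‖lam‖ * ‖β‖ * ‖s‖ ^ μ := by
    rw [hts, norm_mul, norm_mul, norm_pow, Complex.norm_conj]
  have ht2 : ‖t‖ ^ 2
      ≤ (‖lam‖ ^ 2 * (1 + A) ^ μ) * (‖β‖ ^ 2 * (1 + B) ^ μ) := by
    rw [habs_t]
    have hswap : (‖s‖ ^ μ) ^ 2 = (‖s‖ ^ 2) ^ μ := by
      rw [← pow_mul, ← pow_mul, mul_comm]
    calc (‖lam‖ * ‖β‖ * ‖s‖ ^ μ) ^ 2
        = ‖lam‖ ^ 2 * ‖β‖ ^ 2 * (‖s‖ ^ 2) ^ μ := by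
          rw [mul_pow, mul_pow, hswap]
      _ ≤ ‖lam‖ ^ 2 * ‖β‖ ^ 2 * ((1 + A) * (1 + B)) ^ μ := by
          gcongr
      _ = (‖lam‖ ^ 2 * (1 + A) ^ μ) * (‖β‖ ^ 2 * (1 + B) ^ μ) := by
          rw [mul_pow]; ring
  have ht : ‖t‖ < 1 := by
    have h1 : 0 ≤ ‖lam‖ ^ 2 * (1 + A) ^ μ := by positivity
    have h2 : 0 ≤ ‖β‖ ^ 2 * (1 + B) ^ μ := by positivity
    have hlt : ‖t‖ ^ 2 < 1 := lt_of_le_of_lt ht2 (by nlinarith)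
    have := norm_nonneg t
    nlinarith
  have h1t : (1 : ℂ) - t ≠ 0 := by
    intro h
    have h1 : t = 1 := by linear_combination -h
    rw [h1] at ht
    simp at ht
  have H : ∀ m ∈ Finset.range (n + 1),
      HasSum (fun ν : ℕ => (a m : ℂ) * ((((ν + m).choose m : ℕ) : ℂ) * t ^ ν))
        ((a m : ℂ) * (1 / (1 - t) ^ (m + 1))) := fun m _ =>
    (hasSum_choose_mul_geometric_of_norm_lt_one m ht).mul_left _
  have key := hasSum_sum H
  have hfun : (fun ν : ℕ => ∑ m ∈ Finset.range (n + 1),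
        (a m : ℂ) * ((((ν + m).choose m : ℕ) : ℂ) * t ^ ν))
      = fun ν : ℕ => (((μ * ν + n).choose n : ℕ) : ℂ) * s ^ (μ * ν)
          * (lam * (starRingEnd ℂ) β) ^ ν := by
    funext ν
    have h0 := hrep ν
    have hC := congrArg (Complex.ofReal) h0
    push_cast at hC
    have hpow : t ^ ν = s ^ (μ * ν) * (lam * (starRingEnd ℂ) β) ^ ν := by
      rw [hts, mul_pow, ← pow_mul, mul_comm μ ν, mul_comm]
    calc ∑ m ∈ Finset.range (n + 1), (a m : ℂ) * ((((ν + m).choose m : ℕ) : ℂ) * t ^ ν)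
        = (∑ m ∈ Finset.range (n + 1), (a m : ℂ) * (((ν + m).choose m : ℕ) : ℂ)) * t ^ ν := by
          rw [Finset.sum_mul]
          exact Finset.sum_congr rfl fun m _ => by ring
      _ = (((μ * ν + n).choose n : ℕ) : ℂ) * t ^ ν := by rw [← hC]
      _ = _ := by rw [hpow]; ring
  rw [hfun] at key
  have htarget : ∑ m ∈ Finset.range (n + 1), (((-1 : ℝ) ^ (m + 1) * a m : ℝ) : ℂ)
        * (t - 1) ^ (-((m : ℤ) + 1))
      = ∑ m ∈ Finset.range (n + 1), (a m : ℂ) * (1 / (1 - t) ^ (m + 1)) := by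
    refine Finset.sum_congr rfl fun m _ => ?_
    have h2 : (t - 1) ^ (-((m : ℤ) + 1)) = ((t - 1) ^ (m + 1))⁻¹ := by
      rw [show -((m : ℤ) + 1) = -((m + 1 : ℕ) : ℤ) by push_cast; ring, zpow_neg, zpow_natCast]
    have h3 : ((t - 1) ^ (m + 1))⁻¹ = (-1 : ℂ) ^ (m + 1) * ((1 - t) ^ (m + 1))⁻¹ := by
      rw [show t - 1 = -(1 - t) by ring, neg_pow, mul_inv]
      congr 1
      rw [← inv_pow, inv_neg, inv_one]
    have hsq : ((-1 : ℂ) ^ (m + 1)) * ((-1 : ℂ) ^ (m + 1)) = 1 := by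
      rw [← mul_pow]; norm_num
    rw [h2, h3, one_div]
    push_cast
    calc ((-1 : ℂ) ^ (m + 1) * (a m : ℂ)) * ((-1 : ℂ) ^ (m + 1) * ((1 - t) ^ (m + 1))⁻¹)
        = ((-1 : ℂ) ^ (m + 1) * (-1 : ℂ) ^ (m + 1)) * ((a m : ℂ) * ((1 - t) ^ (m + 1))⁻¹) := by
          ring
      _ = (a m : ℂ) * ((1 - t) ^ (m + 1))⁻¹ := by rw [hsq, one_mul]
  rw [htarget]
  exact key
end

section
/- Let l and k be integers with 1 ≤ k ≤ l − k, set n = k(l−k), and let P ∈ ℚ[X] be the unique polynomial with P · ∏_{i=1}^{k}(1 − X^i) · ∏_{i=1}^{l−k}(1 − X^i) = ∏_{i=1}^{l}(1 − X^i). If the coefficient of X^{j−1} in P equals the coefficient of X^{j} in P for every j = 1, …, n, then k = 1. -/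
open Polynomial

private lemma coeff1_mul (p q : Polynomial ℚ) :
    (p*q).coeff 1 = p.coeff 0 * q.coeff 1 + p.coeff 1 * q.coeff 0 := by
  rw [coeff_mul]
  simp [Finset.Nat.antidiagonal_succ, Prod.map]

private lemma coeff2_mul (p q : Polynomial ℚ) :
    (p*q).coeff 2 = p.coeff 0 * q.coeff 2 + p.coeff 1 * q.coeff 1 + p.coeff 2 * q.coeff 0 := by
  rw [coeff_mul]
  simp [Finset.Nat.antidiagonal_succ, Prod.map, Finset.sum_insert]
  ring

private lemma prod_c0 (m : ℕ) :
    (∏ i ∈ Finset.range m, (1 - (X : Polynomial ℚ) ^ (i + 1))).coeff 0 = 1 := by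
  induction m with
  | zero => simp
  | succ m ih =>
      rw [Finset.prod_range_succ, mul_coeff_zero, ih]
      simp

private lemma prod_c1 (m : ℕ) (hm : 1 ≤ m) :
    (∏ i ∈ Finset.range m, (1 - (X : Polynomial ℚ) ^ (i + 1))).coeff 1 = -1 := by
  induction m, hm using Nat.le_induction with
  | base => simp [coeff_sub, coeff_one, coeff_X]
  | succ m hm ih =>
      rw [Finset.prod_range_succ, coeff1_mul, ih, prod_c0]
      have h1 : ((X : Polynomial ℚ) ^ (m + 1)).coeff 1 = 0 := by
        rw [coeff_X_pow]; simp; omega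
      simp [coeff_sub, h1, coeff_one]

private lemma prod_c2 (m : ℕ) (hm : 2 ≤ m) :
    (∏ i ∈ Finset.range m, (1 - (X : Polynomial ℚ) ^ (i + 1))).coeff 2 = -1 := by
  induction m, hm using Nat.le_induction with
  | base =>
      rw [show (2:ℕ) = 1 + 1 from rfl, Finset.prod_range_succ, coeff2_mul,
        prod_c0, prod_c1 1 le_rfl]
      simp [coeff_sub, coeff_one, coeff_X, coeff_X_pow]
  | succ m hm ih =>
      rw [Finset.prod_range_succ, coeff2_mul, ih, prod_c0, prod_c1 m (by omega)]
      have h1 : ((X : Polynomial ℚ) ^ (m + 1)).coeff 1 = 0 := by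
        rw [coeff_X_pow]; simp; omega
      have h2 : ((X : Polynomial ℚ) ^ (m + 1)).coeff 2 = 0 := by
        rw [coeff_X_pow]; simp; omega
      simp [coeff_sub, h1, h2, coeff_one]

/-- If the Poincaré polynomial of the Grassmannian `U(l)/U(k)×U(l−k)` has equal
consecutive coefficients in degrees `0, …, n = k(l−k)`, then `k = 1`. -/
theorem stmt_14 (l k : ℕ) (hk : 1 ≤ k) (hkl : k ≤ l - k) (n : ℕ) (hn : n = k * (l - k))
    (P : Polynomial ℚ)
    (hP : P * ((∏ i ∈ Finset.range k, (1 - (X : Polynomial ℚ) ^ (i + 1))) *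
          ∏ i ∈ Finset.range (l - k), (1 - (X : Polynomial ℚ) ^ (i + 1)))
        = ∏ i ∈ Finset.range l, (1 - (X : Polynomial ℚ) ^ (i + 1)))
    (hcoeff : ∀ j, 1 ≤ j → j ≤ n → P.coeff (j - 1) = P.coeff j) :
    k = 1 := by
  by_contra hne
  have hk2 : 2 ≤ k := by omega
  have hlk2 : 2 ≤ l - k := le_trans hk2 hkl
  have hl2 : 2 ≤ l := by omega
  set A := ∏ i ∈ Finset.range k, (1 - (X : Polynomial ℚ) ^ (i + 1)) with hA
  set B := ∏ i ∈ Finset.range (l - k), (1 - (X : Polynomial ℚ) ^ (i + 1)) with hB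
  -- coefficients of A and B
  have hA0 : A.coeff 0 = 1 := prod_c0 k
  have hA1 : A.coeff 1 = -1 := prod_c1 k (by omega)
  have hA2 : A.coeff 2 = -1 := prod_c2 k hk2
  have hB0 : B.coeff 0 = 1 := prod_c0 (l - k)
  have hB1 : B.coeff 1 = -1 := prod_c1 (l - k) (by omega)
  have hB2 : B.coeff 2 = -1 := prod_c2 (l - k) hlk2
  -- n ≥ 2
  have hn4 : 4 ≤ n := by
    rw [hn]; calc (4:ℕ) = 2 * 2 := rfl
    _ ≤ k * (l - k) := Nat.mul_le_mul hk2 hlk2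
  -- P.coeff 0 = 1
  have hP0 : P.coeff 0 = 1 := by
    have := congrArg (fun p => Polynomial.coeff p 0) hP
    simp only [mul_coeff_zero, hA0, hB0, prod_c0 l, mul_one] at this
    exact this
  have hP1 : P.coeff 1 = 1 := by
    have := hcoeff 1 le_rfl (by omega)
    simpa [hP0] using this.symm
  have hP2 : P.coeff 2 = 1 := by
    have := hcoeff 2 (by omega) (by omega)
    simpa [hP1] using this.symm
  -- coefficients of A*B
  have hAB0 : (A*B).coeff 0 = 1 := by rw [mul_coeff_zero, hA0, hB0]; ring
  have hAB1 : (A*B).coeff 1 = -2 := by rw [coeff1_mul, hA0, hA1, hB0, hB1]; ring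
  have hAB2 : (A*B).coeff 2 = -1 := by rw [coeff2_mul, hA0, hA1, hA2, hB0, hB1, hB2]; ring
  -- compare coefficient 2 of both sides of hP
  have := congrArg (fun p => Polynomial.coeff p 2) hP
  simp only [coeff2_mul P (A*B), hP0, hP1, hP2, hAB0, hAB1, hAB2, prod_c2 l hl2] at this
  norm_num at this
end
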